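/- Let α > 0 and ω > 0, and define u(x,t) = 2α√ω (√(α²+ω) + √ω) e^{x√ω + iωt} / ( α²(e^{2x√ω} − 1) + 2√ω (√(α²+ω) + √ω) e^{2x√ω} ). Then |u(x,t)| ≤ α e^{−x√ω} for all x ≥ 0 and t ∈ ℝ. In particular, ∫₀^∞ |u(x,t)| dx ≤ α/√ω for every t, so the L¹-norm of u(·,t) over [0,∞) is bounded uniformly in t. -/

import Mathlib

open MeasureTheory Set

noncomputable section

/-- The explicit function
`u(x,t) = 2α√ω(√(α²+ω)+√ω) e^{x√ω + iωt} / (α²(e^{2x√ω}-1) + 2√ω(√(α²+ω)+√ω)e^{2x√ω})`. -/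
def uExact (α ω : ℝ) : ℝ → ℝ → ℂ := fun x t =>
  ((2 * α * Real.sqrt ω * (Real.sqrt (α ^ 2 + ω) + Real.sqrt ω) : ℝ) : ℂ) *
      Complex.exp ((x * Real.sqrt ω : ℝ) + Complex.I * ω * t) /
    (((α ^ 2 : ℝ) : ℂ) * (Complex.exp ((2 * x * Real.sqrt ω : ℝ) : ℂ) - 1) +
      ((2 * Real.sqrt ω * (Real.sqrt (α ^ 2 + ω) + Real.sqrt ω) : ℝ) : ℂ) *
        Complex.exp ((2 * x * Real.sqrt ω : ℝ) : ℂ))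

/-- For `α > 0`, `ω > 0`, the explicit solution satisfies `|u(x,t)| ≤ α e^{-x√ω}` for all
`x ≥ 0`, `t ∈ ℝ`; in particular its `L¹(0,∞)`-norm in `x` is bounded by `α/√ω`, uniformly
in `t`. -/
theorem uExact_decay_bound (α ω : ℝ) (hα : 0 < α) (hω : 0 < ω) :
    (∀ x ≥ (0:ℝ), ∀ t : ℝ, ‖uExact α ω x t‖ ≤ α * Real.exp (-(x * Real.sqrt ω))) ∧
    (∀ t : ℝ, (∫ x in Set.Ioi (0:ℝ), ‖uExact α ω x t‖) ≤ α / Real.sqrt ω) := by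
  set s := Real.sqrt ω with hs_def
  have hs : 0 < s := Real.sqrt_pos.mpr hω
  set K := Real.sqrt (α ^ 2 + ω) + s with hK_def
  have hK : 0 < K := by
    have : 0 ≤ Real.sqrt (α ^ 2 + ω) := Real.sqrt_nonneg _
    linarith
  have key : ∀ x ≥ (0:ℝ), ∀ t : ℝ, ‖uExact α ω x t‖ ≤ α * Real.exp (-(x * s)) := by
    intro x hx t
    have hE1 : (1:ℝ) ≤ Real.exp (2 * x * s) := by
      rw [show (1:ℝ) = Real.exp 0 by simp]
      exact Real.exp_le_exp.mpr (by positivity)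
    set D : ℝ := α ^ 2 * (Real.exp (2 * x * s) - 1) + 2 * s * K * Real.exp (2 * x * s)
      with hD_def
    have hD : 0 < D := by
      have h1 : 0 ≤ α ^ 2 * (Real.exp (2 * x * s) - 1) := by nlinarith
      have h2 : 0 < 2 * s * K * Real.exp (2 * x * s) := by positivity
      linarith
    have hden : ((α ^ 2 : ℝ) : ℂ) * (Complex.exp ((2 * x * s : ℝ) : ℂ) - 1) +
        ((2 * s * K : ℝ) : ℂ) * Complex.exp ((2 * x * s : ℝ) : ℂ) = ((D : ℝ) : ℂ) := by
      rw [hD_def]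
      simp only [Complex.ofReal_add, Complex.ofReal_mul, Complex.ofReal_sub,
        Complex.ofReal_one, Complex.ofReal_exp, Complex.ofReal_pow, Complex.ofReal_ofNat]
    have hnorm : ‖uExact α ω x t‖ = (2 * α * s * K) * Real.exp (x * s) / D := by
      rw [uExact]
      simp only [← hs_def, ← hK_def, hden]
      rw [norm_div, norm_mul, Complex.norm_exp, Complex.norm_real, Complex.norm_real,
        Real.norm_eq_abs, Real.norm_eq_abs]
      have hre : ((x * s : ℝ) + Complex.I * ω * t : ℂ).re = x * s := by
        simp [Complex.add_re, Complex.mul_re]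
      rw [hre, abs_of_pos (by positivity : (0:ℝ) < 2 * α * s * K), abs_of_pos hD]
    rw [hnorm, div_le_iff₀ hD]
    have hexp : Real.exp (-(x * s)) * Real.exp (2 * x * s) = Real.exp (x * s) := by
      rw [← Real.exp_add]; ring_nf
    have h2 : α * Real.exp (-(x * s)) * (2 * s * K * Real.exp (2 * x * s))
        = 2 * α * s * K * Real.exp (x * s) := by
      rw [← hexp]; ring
    have h3 : 0 ≤ α * Real.exp (-(x * s)) * (α ^ 2 * (Real.exp (2 * x * s) - 1)) := by
      have : 0 ≤ Real.exp (2 * x * s) - 1 := by linarith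
      positivity
    calc 2 * α * s * K * Real.exp (x * s)
        = α * Real.exp (-(x * s)) * (2 * s * K * Real.exp (2 * x * s)) := h2.symm
      _ ≤ α * Real.exp (-(x * s)) * D := by rw [hD_def]; nlinarith
  refine ⟨key, fun t => ?_⟩
  have hbound : (∫ x in Set.Ioi (0:ℝ), ‖uExact α ω x t‖)
      ≤ ∫ x in Set.Ioi (0:ℝ), α * Real.exp (-(x * s)) := by
    apply integral_mono_of_nonneg
    · filter_upwards with x using norm_nonneg _
    · apply Integrable.const_mul
      have h := exp_neg_integrableOn_Ioi 0 hs
      have heq : (fun x : ℝ => Real.exp (-(s * x))) = fun x => Real.exp (-(x * s)) := by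
        funext x; ring_nf
      have h' : IntegrableOn (fun x => Real.exp (-(x * s))) (Ioi 0) := by simpa [heq] using h
      exact h'
    · filter_upwards [ae_restrict_mem measurableSet_Ioi] with x hx
      exact key x (le_of_lt hx) t
  have hval : (∫ x in Set.Ioi (0:ℝ), α * Real.exp (-(x * s))) = α / s := by
    rw [MeasureTheory.integral_const_mul]
    have : (∫ x in Set.Ioi (0:ℝ), Real.exp (-(x * s)))
        = ∫ x in Set.Ioi (0:ℝ), Real.exp (-(x * s)) := rfl
    have h1 : (∫ x in Set.Ioi (0:ℝ), Real.exp (-(x * s))) = s⁻¹ * 1 := by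
      have := integral_comp_mul_right_Ioi (fun y => Real.exp (-y)) 0 hs
      simp only [zero_mul, smul_eq_mul] at this
      rw [show (fun x => Real.exp (-(x * s))) = (fun x => Real.exp (-(x * s))) from rfl]
      calc (∫ x in Set.Ioi (0:ℝ), Real.exp (-(x * s)))
          = s⁻¹ * ∫ x in Set.Ioi (0:ℝ), Real.exp (-x) := this
        _ = s⁻¹ * 1 := by rw [integral_exp_neg_Ioi_zero]
    rw [h1]; field_simp
  linarith [hbound, hval.le, le_of_eq hval]
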